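/- arXiv:2410.06275 — 5 statements merged into one kernel-verified Lean document; each statement's English description precedes it below -/
import Mathlib

section
/- If ⟨P_n : n < ω⟩ is a countable family of directed partial orders each of which is (ω₁, ω₁)-cohesive, then the product ∏_{n<ω} P_n (with coordinatewise order) is (ω₁, ω)-cohesive. -/
open Cardinal

/-- A directed poset is `(λ, μ)`-cohesive if every `λ`-sequence has a set of indices of
cardinality `μ` whose elements are bounded. -/
def Cohesive {α : Type*} [Preorder α] (lam mu : Cardinal) : Prop :=
  ∀ p : lam.ord.ToType → α, ∃ I : Set lam.ord.ToType, #I = mu ∧ ∃ b, ∀ i ∈ I, p i ≤ b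


universe u v w in
theorem cohesive_transfer {α : Type w} [Preorder α] {T : Type v}
    (hmkT : #T = Cardinal.aleph.{v} 1)
    (h : Cohesive (α := α) (Cardinal.aleph.{u} 1) (Cardinal.aleph.{u} 1)) :
    ∀ q : T → α, ∃ I : Set T, #I = Cardinal.aleph.{v} 1 ∧ ∃ b, ∀ i ∈ I, q i ≤ b := by
  have key : Cardinal.lift.{u} #T =
      Cardinal.lift.{v} #((Cardinal.aleph.{u} 1).ord.ToType) := by
    rw [hmkT, Cardinal.mk_ord_toType, Cardinal.lift_aleph, Cardinal.lift_aleph,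
      Ordinal.lift_one, Ordinal.lift_one]
  obtain ⟨e⟩ := Cardinal.lift_mk_eq'.mp key
  intro q
  obtain ⟨I, hI, b, hb⟩ := h (fun j => q (e.symm j))
  refine ⟨(fun j => e.symm j) '' I, ?_, b, ?_⟩
  · have he : Nonempty (((fun j => e.symm j) '' I : Set T) ≃ I) :=
      ⟨(Equiv.Set.image _ I e.symm.injective).symm⟩
    have hl := Cardinal.lift_mk_eq'.mpr he
    rw [hI] at hl
    rw [← Cardinal.lift_inj.{v, u}, hl, Cardinal.lift_aleph, Cardinal.lift_aleph,
      Ordinal.lift_one, Ordinal.lift_one]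
  · rintro x ⟨j, hj, rfl⟩; exact hb j hj

theorem stmt_3_aux {P : ℕ → Type*} [∀ n, PartialOrder (P n)] {T : Type*}
    (hmkT : #T = Cardinal.aleph 1)
    (hdir : ∀ n, ∀ a b : P n, ∃ c, a ≤ c ∧ b ≤ c)
    (hcoh : ∀ n, ∀ q : T → P n,
      ∃ I : Set T, #I = Cardinal.aleph 1 ∧ ∃ b, ∀ i ∈ I, q i ≤ b)
    (p : T → ∀ n, P n) :
    ∃ I : Set T, #I = Cardinal.aleph0 ∧ ∃ b, ∀ i ∈ I, p i ≤ b := by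
  classical
  -- shrink lemma
  have shrink : ∀ (n : ℕ) (s : Set T), #s = Cardinal.aleph 1 →
      ∃ s' : Set T, s' ⊆ s ∧ #s' = Cardinal.aleph 1 ∧ ∃ b, ∀ i ∈ s', p i n ≤ b := by
    intro n s hs
    have hes : #T = #s := by rw [hmkT, hs]
    obtain ⟨e⟩ := Cardinal.eq.mp hes
    obtain ⟨I, hI, b, hb⟩ := hcoh n (fun j => p (e j) n)
    refine ⟨(fun j => (e j : T)) '' I, ?_, ?_, b, ?_⟩
    · rintro x ⟨j, _, rfl⟩; exact (e j).2
    · rw [Cardinal.mk_image_eq (fun a b hab => e.injective (Subtype.val_injective hab))]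
      exact hI
    · rintro x ⟨j, hj, rfl⟩; exact hb j hj
  choose F hFsub hFcard bF hbF using shrink
  -- the decreasing chain of sets
  have h0 : #(Set.univ : Set T) = Cardinal.aleph 1 := by rw [Cardinal.mk_univ, hmkT]
  let g : ℕ → {s : Set T // #s = Cardinal.aleph 1} := fun n =>
    Nat.rec ⟨Set.univ, h0⟩ (fun n ih => ⟨F n ih.1 ih.2, hFcard n ih.1 ih.2⟩) n
  set S : ℕ → Set T := fun n => (g n).1 with hS
  have hScard : ∀ n, #(S n) = Cardinal.aleph 1 := fun n => (g n).2
  have hSstep : ∀ n, S (n + 1) ⊆ S n := fun n => hFsub n (S n) (g n).2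
  have hSmono : ∀ {n m : ℕ}, n ≤ m → S m ⊆ S n := by
    intro n m h
    induction h with
    | refl => exact subset_rfl
    | step h ih => exact fun x hx => ih (hSstep _ hx)
  set B : ∀ n, P n := fun n => bF n (S n) (g n).2 with hB
  have hBbd : ∀ n, ∀ x ∈ S (n + 1), p x n ≤ B n := fun n => hbF n (S n) (g n).2
  -- pick an injective sequence i with i n ∈ S (n+1)
  have hInf : ∀ n, (S n).Infinite := by
    intro n
    rw [← Set.infinite_coe_iff, Cardinal.infinite_iff, hScard n]
    exact Cardinal.aleph0_le_aleph 1
  have key : ∀ (n : ℕ) (v : Finset T), ∃ x, x ∈ S (n + 1) ∧ x ∉ v := by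
    intro n v
    obtain ⟨x, hx⟩ := ((hInf (n + 1)).diff v.finite_toSet).nonempty
    exact ⟨x, hx.1, hx.2⟩
  choose pick hpickS hpickN using key
  let f : ℕ → T × Finset T := fun n =>
    Nat.rec (pick 0 ∅, {pick 0 ∅})
      (fun n ih => (pick (n + 1) ih.2, insert (pick (n + 1) ih.2) ih.2)) n
  set i : ℕ → T := fun n => (f n).1 with hi
  have hiS : ∀ n, i n ∈ S (n + 1) := by
    intro n; cases n with
    | zero => exact hpickS 0 ∅
    | succ n => exact hpickS (n + 1) (f n).2
  have hmem : ∀ n, i n ∈ (f n).2 := by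
    intro n; cases n with
    | zero => exact Finset.mem_singleton_self _
    | succ n => exact Finset.mem_insert_self _ _
  have hfmono : ∀ {n m : ℕ}, n ≤ m → (f n).2 ⊆ (f m).2 := by
    intro n m h
    induction h with
    | refl => exact subset_rfl
    | step h ih => exact ih.trans (Finset.subset_insert _ _)
  have hinj : Function.Injective i := by
    have hne : ∀ {n m : ℕ}, n < m → i n ≠ i m := by
      intro n m hlt heq
      obtain ⟨k, rfl⟩ := Nat.exists_eq_add_of_lt hlt
      have h1 : i n ∈ (f (n + k)).2 := hfmono (Nat.le_add_right n k) (hmem n)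
      have h2 : i (n + k + 1) ∉ (f (n + k)).2 := hpickN (n + k + 1) (f (n + k)).2
      rw [heq] at h1
      exact h2 h1
    intro n m h
    rcases lt_trichotomy n m with hlt | he | hgt
    · exact absurd h (hne hlt)
    · exact he
    · exact absurd h.symm (hne hgt)
  -- directedness instances
  haveI : ∀ n, IsDirected (P n) (· ≤ ·) := fun n => ⟨hdir n⟩
  haveI hTne : Nonempty T := by
    rw [← Cardinal.mk_ne_zero_iff, hmkT]
    exact (Cardinal.aleph_pos 1).ne'
  haveI : ∀ n, Nonempty (P n) := fun n => ⟨p hTne.some n⟩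
  -- construct the bound
  have hbnd : ∀ k : ℕ, ∃ c : P k, B k ≤ c ∧ ∀ n < k, p (i n) k ≤ c := by
    intro k
    obtain ⟨c, hc⟩ :=
      (insert (B k) ((Finset.range k).image (fun n => p (i n) k))).exists_le
    refine ⟨c, hc _ (Finset.mem_insert_self _ _), fun n hn => ?_⟩
    exact hc _ (Finset.mem_insert_of_mem
      (Finset.mem_image_of_mem _ (Finset.mem_range.mpr hn)))
  choose c hc1 hc2 using hbnd
  refine ⟨Set.range i, ?_, c, ?_⟩
  · haveI := (Set.countable_range i).to_subtype
    haveI := (Set.infinite_range_of_injective hinj).to_subtype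
    exact Cardinal.mk_eq_aleph0 _
  · rintro x ⟨n, rfl⟩ k
    rcases lt_or_ge n k with h | h
    · exact hc2 k n h
    · have hx : i n ∈ S (k + 1) := hSmono (Nat.succ_le_succ h) (hiS n)
      exact (hBbd k (i n) hx).trans (hc1 k)

/-- a countable product of `(ω₁, ω₁)`-cohesive directed posets is
`(ω₁, ω)`-cohesive (with the coordinatewise order). -/
theorem stmt_3 {P : ℕ → Type*} [∀ n, PartialOrder (P n)]
    (hdir : ∀ n, ∀ a b : P n, ∃ c, a ≤ c ∧ b ≤ c)
    (hcoh : ∀ n, Cohesive (α := P n) (Cardinal.aleph 1) (Cardinal.aleph 1)) :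
    Cohesive (α := ∀ n, P n) (Cardinal.aleph 1) Cardinal.aleph0 := by
  intro p
  exact stmt_3_aux (Cardinal.mk_ord_toType _) hdir
    (fun n => cohesive_transfer (Cardinal.mk_ord_toType _) (hcoh n)) p
end

section
/- For any infinite cardinal λ and any ultrafilter U ordered by reverse inclusion, U fails to be (cf(λ), cf(λ))-cohesive if and only if (λ, <) ≤_T (U, ⊇). -/
open Cardinal

/-- An ultrafilter `U` is `(θ, θ)`-cohesive if every `θ`-family from `U` has a subfamily
of size `θ` whose intersection is in `U`. -/
def UCohesive {K : Type*} (U : Ultrafilter K) (lam mu : Cardinal) : Prop :=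
  ∀ A : lam.ord.ToType → Set K, (∀ i, A i ∈ U) →
    ∃ I : Set lam.ord.ToType, #I = mu ∧ (⋂ i ∈ I, A i) ∈ U

private lemma card_Iio_lt {c : Cardinal} (b : c.ord.ToType) : #(Set.Iio b) < c := by
  haveI : IsWellOrder c.ord.ToType (· < ·) := isWellOrder_lt
  have h1 : #{ y : c.ord.ToType // y < b } = (Ordinal.typein (α := c.ord.ToType) (· < ·) b).card :=
    Ordinal.card_typein b
  have h2 : #(Set.Iio b) = #{ y : c.ord.ToType // y < b } := rfl
  rw [h2, h1, ← Cardinal.lt_ord]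
  exact Ordinal.typein_lt_self b

private lemma unbounded_iff_mk_eq {c : Cardinal} (hc : c.IsRegular) (I : Set c.ord.ToType) :
    ¬ BddAbove I ↔ #I = c := by
  haveI : IsWellOrder c.ord.ToType (· < ·) := isWellOrder_lt
  haveI : NoMaxOrder c.ord.ToType :=
    Ordinal.toType_noMax_of_succ_lt fun a ha => (Cardinal.isSuccLimit_ord hc.aleph0_le).succ_lt ha
  constructor
  · intro h
    have hub : Set.Unbounded (· < ·) I := by
      intro a
      obtain ⟨y, hy, hy'⟩ := not_bddAbove_iff.mp h a
      exact ⟨y, hy, asymm hy'⟩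
    have h1 : c ≤ #I := by
      have := Order.cof_le (s := I) (fun a => let ⟨b, hb, hb'⟩ := hub a; ⟨b, hb, not_lt.mp hb'⟩)
      rwa [Ordinal.cof_toType, hc.cof_eq] at this
    have h2 : #I ≤ c := by
      have := Cardinal.mk_le_mk_of_subset (Set.subset_univ I)
      rwa [Cardinal.mk_univ, Cardinal.mk_toType, Cardinal.card_ord] at this
    exact le_antisymm h2 h1
  · intro h hbdd
    obtain ⟨a, ha⟩ := hbdd
    obtain ⟨b, hab⟩ := exists_gt a
    have hsub : I ⊆ Set.Iio b := fun x hx => lt_of_le_of_lt (ha hx) hab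
    have h3 := Cardinal.mk_le_mk_of_subset hsub
    rw [h] at h3
    exact (card_Iio_lt b).not_ge h3

/-- for an infinite cardinal `λ`, `U` is not `(cf λ, cf λ)`-cohesive iff
`(λ, <) ≤_T (U, ⊇)`, i.e. there is a Tukey (unbounded) map from the ordinals below `λ`
into `U` ordered by reverse inclusion. -/
theorem stmt_5 {K : Type*} (U : Ultrafilter K) (lam : Cardinal) (hlam : Cardinal.aleph0 ≤ lam) :
    ¬ UCohesive U lam.ord.cof lam.ord.cof ↔
      ∃ f : lam.ord.ToType → Set K, (∀ i, f i ∈ U) ∧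
        ∀ A : Set lam.ord.ToType, ¬ BddAbove A → ¬ ∃ B ∈ U, ∀ i ∈ A, B ⊆ f i := by
  classical
  have olim : Order.IsSuccLimit lam.ord := Cardinal.isSuccLimit_ord hlam
  have hreg : lam.ord.cof.IsRegular := Cardinal.isRegular_cof olim
  obtain ⟨s, hs⟩ := Ordinal.exists_fundamental_sequence lam.ord
  haveI : NoMaxOrder lam.ord.ToType :=
    Ordinal.toType_noMax_of_succ_lt fun a ha => olim.succ_lt ha
  haveI : NoMaxOrder lam.ord.cof.ord.ToType :=
    Ordinal.toType_noMax_of_succ_lt fun a ha =>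
      (Cardinal.isSuccLimit_ord hreg.aleph0_le).succ_lt ha
  set eo := Ordinal.ToType.mk (o := lam.ord) with heo
  set eτ := Ordinal.ToType.mk (o := lam.ord.cof.ord) with heτ
  have hslt : ∀ (b) (hb : b < lam.ord.cof.ord), s b hb < lam.ord := by
    intro b hb
    conv_rhs => rw [← hs.blsub_eq]
    exact Ordinal.lt_blsub s b hb
  set e : lam.ord.cof.ord.ToType → lam.ord.ToType :=
    fun j => eo ⟨s (eτ.symm j).1 (eτ.symm j).2, hslt _ _⟩ with he
  have emono : StrictMono e := by
    intro j j' hjj'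
    have h1 : eτ.symm j < eτ.symm j' := eτ.symm.strictMono hjj'
    exact eo.strictMono (Subtype.mk_lt_mk.mpr (hs.strict_mono _ _ h1))
  have ecof : ∀ i : lam.ord.ToType, ∃ j, i ≤ e j := by
    intro i
    have h1 : (eo.symm i : Ordinal) < Ordinal.blsub lam.ord.cof.ord s := by
      rw [hs.blsub_eq]; exact (eo.symm i).2
    obtain ⟨b, hb, hle⟩ := Ordinal.lt_blsub_iff.mp h1
    refine ⟨eτ ⟨b, hb⟩, ?_⟩
    conv_lhs => rw [← eo.apply_symm_apply i]
    apply eo.monotone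
    simp only [he, OrderIso.symm_apply_apply]
    exact Subtype.coe_le_coe.mp hle
  constructor
  · intro hnc
    rw [UCohesive] at hnc
    push_neg at hnc
    obtain ⟨A, hAU, hA⟩ := hnc
    choose h hh using ecof
    refine ⟨fun i => A (h i), fun i => hAU _, ?_⟩
    rintro S hS ⟨B, hBU, hBsub⟩
    have hI : ¬ BddAbove (h '' S) := by
      rw [not_bddAbove_iff]
      intro b
      obtain ⟨i, hiS, hib⟩ := not_bddAbove_iff.mp hS (e b)
      refine ⟨h i, ⟨i, hiS, rfl⟩, ?_⟩
      exact emono.lt_iff_lt.mp (lt_of_lt_of_le hib (hh i))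
    have hcard : #(h '' S) = lam.ord.cof := (unbounded_iff_mk_eq hreg _).mp hI
    refine hA (h '' S) hcard (Filter.mem_of_superset hBU ?_)
    intro x hx
    simp only [Set.mem_iInter]
    rintro j ⟨i, hiS, rfl⟩
    exact hBsub i hiS hx
  · rintro ⟨f, hfU, hf⟩ hcoh
    obtain ⟨I, hIcard, hIU⟩ := hcoh (fun j => f (e j)) (fun j => hfU _)
    have hIunb : ¬ BddAbove I := (unbounded_iff_mk_eq hreg I).mpr hIcard
    have hA'unb : ¬ BddAbove (e '' I) := by
      rw [not_bddAbove_iff]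
      intro b
      obtain ⟨j1, hj1⟩ := ecof b
      obtain ⟨j, hjI, hjj1⟩ := not_bddAbove_iff.mp hIunb j1
      exact ⟨e j, ⟨j, hjI, rfl⟩, lt_of_le_of_lt hj1 (emono hjj1)⟩
    refine hf (e '' I) hA'unb ⟨_, hIU, ?_⟩
    rintro i ⟨j, hjI, rfl⟩
    exact Set.biInter_subset_of_mem hjI
end

section
/- Let U be a uniform ultrafilter over a cardinal κ with character θ = ch(U), the least cardinality of a base of U. Then (θ, <) ≤_T (U, ⊇); equivalently, U is not (cf(θ), cf(θ))-cohesive. -/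
open Cardinal

/-- if `U` is a uniform ultrafilter and `θ = ch(U)` is its character
(the least cardinality of a base of `U`), then `(θ, <) ≤_T (U, ⊇)`:
there is a Tukey (unbounded) map from the ordinals below `θ` into `(U, ⊇)`. -/
theorem stmt_6 {K : Type*} (U : Ultrafilter K)
    (huniform : ∀ X ∈ U, #X = #K)
    (theta : Cardinal)
    (htheta : IsLeast {c : Cardinal |
      ∃ B : Set (Set K), (∀ b ∈ B, b ∈ U) ∧ (∀ X ∈ U, ∃ b ∈ B, b ⊆ X) ∧ #B = c} theta) :
    ∃ f : theta.ord.ToType → Set K, (∀ i, f i ∈ U) ∧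
      ∀ A : Set theta.ord.ToType, ¬ BddAbove A → ¬ ∃ B ∈ U, ∀ i ∈ A, B ⊆ f i := by
  obtain ⟨⟨B, hBU, hBbase, hBcard⟩, hmin⟩ := htheta
  -- enumerate the base
  have hcard : #(theta.ord.ToType) = #B := by rw [mk_ord_toType, hBcard]
  obtain ⟨e⟩ := Cardinal.eq.mp hcard
  -- for every α, the initial segment of the base is not a base
  have key : ∀ α : theta.ord.ToType, ∃ X, X ∈ U ∧ ∀ β < α, ¬ (e β : Set K) ⊆ X := by
    intro α
    by_contra h
    push_neg at h
    -- then e '' (Iio α) would be a base of size < θ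
    have hmem : #(↥((↑) '' (e '' Set.Iio α) : Set (Set K))) ∈ {c : Cardinal |
        ∃ B : Set (Set K), (∀ b ∈ B, b ∈ U) ∧ (∀ X ∈ U, ∃ b ∈ B, b ⊆ X) ∧ #B = c} := by
      refine ⟨_, ?_, ?_, rfl⟩
      · rintro b ⟨b', -, rfl⟩
        exact hBU _ b'.2
      · intro X hX
        obtain ⟨β, hβα, hβX⟩ := h X hX
        exact ⟨e β, ⟨e β, ⟨β, hβα, rfl⟩, rfl⟩, hβX⟩
    have hlt : #(↥((↑) '' (e '' Set.Iio α) : Set (Set K))) < theta := by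
      calc #(↥((↑) '' (e '' Set.Iio α) : Set (Set K)))
          ≤ #(Set.Iio α) := by
            refine (Cardinal.mk_image_le).trans ?_
            exact Cardinal.mk_image_le
        _ < theta := Cardinal.mk_Iio_ord_toType α
    exact absurd (hmin hmem) (not_le.mpr hlt)
  choose f hfU hf using key
  refine ⟨f, hfU, ?_⟩
  intro A hA ⟨X, hXU, hXf⟩
  obtain ⟨b, hbB, hbX⟩ := hBbase X hXU
  obtain ⟨β, hβ⟩ := e.surjective ⟨b, hbB⟩
  obtain ⟨α, hαA, hβα⟩ := not_bddAbove_iff.mp hA β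
  refine hf α β hβα ?_
  rw [hβ]
  exact hbX.trans (hXf α hαA)
end

section
/- If 2^κ = κ⁺, then no uniform ultrafilter on κ is (κ⁺, κ⁺)-cohesive. -/
open Cardinal

lemma exists_injective_transversal {ι K : Type u} (c : Cardinal.{u})
    (hι : #ι ≤ c) (S : ι → Set K) (hS : ∀ i, c ≤ #(S i)) :
    ∃ g : ι → K, Function.Injective g ∧ ∀ i, g i ∈ S i := by
  have hι' : #ι ≤ #(c.ord.ToType) := by rwa [Cardinal.mk_ord_toType]
  obtain ⟨e⟩ := Cardinal.le_def _ _ |>.mp hι'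
  set r : ι → ι → Prop := fun i j => e i < e j with hr
  have wf : WellFounded r := InvImage.wf e (IsWellFounded.wf)
  have hne : ∀ (i : ι) (rec : ∀ j, r j i → K),
      (S i \ Set.range (fun p : {j // r j i} => rec p.1 p.2)).Nonempty := by
    intro i rec
    rw [Set.diff_nonempty]
    intro hsub
    have h1 : #(S i) ≤ #{j // r j i} :=
      (Cardinal.mk_le_mk_of_subset hsub).trans (Cardinal.mk_range_le)
    have h2 : #{j // r j i} ≤ #(Set.Iio (e i)) :=
      Cardinal.mk_le_of_injective (f := fun j => (⟨e j.1, j.2⟩ : Set.Iio (e i)))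
        (by intro a b hab
            simp only [Subtype.mk.injEq] at hab
            exact Subtype.ext (e.injective (congrArg Subtype.val hab)))
    have h3 : #(Set.Iio (e i)) < c := Cardinal.mk_Iio_ord_toType (e i)
    exact absurd ((hS i).trans (h1.trans h2)) (not_le.mpr h3)
  set g : ι → K := wf.fix (fun i rec => (hne i rec).some) with hg
  have heq : ∀ i, g i = (hne i (fun j _ => g j)).some := fun i => wf.fix_eq _ i
  have hspec : ∀ i, g i ∈ S i \ Set.range (fun p : {j // r j i} => g p.1) := by
    intro i
    rw [heq i]
    exact Set.Nonempty.some_mem _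
  refine ⟨g, ?_, fun i => (hspec i).1⟩
  intro i j hgij
  by_contra hne'
  rcases lt_trichotomy (e i) (e j) with h | h | h
  · exact (hspec j).2 ⟨⟨i, h⟩, hgij⟩
  · exact hne' (e.injective h)
  · exact (hspec i).2 ⟨⟨j, h⟩, hgij.symm⟩

/-- Kanamori: if `2^κ = κ⁺`, then no uniform ultrafilter on `κ` is
`(κ⁺, κ⁺)`-cohesive. -/
theorem stmt_7 {K : Type*} (hK : Cardinal.aleph0 ≤ #K)
    (hGCH : (2 : Cardinal) ^ #K = Order.succ #K)
    (U : Ultrafilter K) (huniform : ∀ X ∈ U, #X = #K) :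
    ¬ UCohesive U (Order.succ #K) (Order.succ #K) := by
  intro hcoh
  have hsetcard : #(Set K) = #((Order.succ #K).ord.ToType) := by
    rw [Cardinal.mk_set, hGCH, Cardinal.mk_ord_toType]
  obtain ⟨f⟩ := Cardinal.eq.mp hsetcard
  set T := (Order.succ #K).ord.ToType
  set S' : T → Set K := fun β => if #(f.symm β : Set K) = #K then f.symm β else Set.univ
    with hS'def
  have hS' : ∀ β, #K ≤ #(S' β) := by
    intro β
    rw [hS'def]
    dsimp only
    split_ifs with h
    · exact h.ge
    · simp
  -- key construction
  have key : ∀ α : T, ∃ A : Set K, A ∈ U ∧ ∀ β, β ≤ α → (S' β \ A).Nonempty := by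
    intro α
    have hIic : #{β : T // β ≤ α} ≤ #K := by
      have h1 : (Set.Iic α) = insert α (Set.Iio α) := by
        ext x; simp [le_iff_lt_or_eq, or_comm]
      have h2 : #(Set.Iic α) ≤ #(Set.Iio α) + 1 := by
        rw [h1]; exact Cardinal.mk_insert_le
      have h3 : #(Set.Iio α) < Order.succ #K := Cardinal.mk_Iio_ord_toType α
      have h4 : #(Set.Iio α) ≤ #K := Order.lt_succ_iff.mp h3
      calc #{β : T // β ≤ α} = #(Set.Iic α) := rfl
        _ ≤ #(Set.Iio α) + 1 := h2
        _ ≤ #K + 1 := by exact add_le_add_left h4 1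
        _ = #K := by
            refine Cardinal.add_one_eq hK
    have hι : #({β : T // β ≤ α} ⊕ {β : T // β ≤ α}) ≤ #K := by
      simp only [Cardinal.mk_sum, Cardinal.lift_id]
      calc #{β : T // β ≤ α} + #{β : T // β ≤ α} ≤ #K + #K := add_le_add hIic hIic
        _ = #K := Cardinal.add_eq_self hK
    obtain ⟨g, ginj, gmem⟩ := exists_injective_transversal #K hι
      (fun p => S' (p.elim Subtype.val Subtype.val))
      (fun p => hS' _)
    set D₁ : Set K := Set.range (g ∘ Sum.inl) with hD₁
    set D₂ : Set K := Set.range (g ∘ Sum.inr) with hD₂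
    have hdisj : Disjoint D₁ D₂ := by
      rw [Set.disjoint_iff_inter_eq_empty]
      ext x
      simp only [Set.mem_inter_iff, Set.mem_empty_iff_false, iff_false]
      rintro ⟨⟨a, ha⟩, ⟨b, hb⟩⟩
      have : Sum.inl a = Sum.inr b := ginj (ha.trans hb.symm)
      exact Sum.inl_ne_inr this
    by_cases hD : D₁ ∈ U
    · have hD2 : D₂ ∉ U := by
        intro hD2
        have : D₁ ∩ D₂ ∈ U := U.inter_mem hD hD2
        rw [Set.disjoint_iff_inter_eq_empty.mp hdisj] at this
        exact U.empty_notMem this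
      refine ⟨D₂ᶜ, (Ultrafilter.compl_mem_iff_notMem).mpr hD2, ?_⟩
      intro β hβ
      refine ⟨g (Sum.inr ⟨β, hβ⟩), gmem (Sum.inr ⟨β, hβ⟩), ?_⟩
      simp only [Set.mem_compl_iff, not_not]
      exact ⟨⟨β, hβ⟩, rfl⟩
    · refine ⟨D₁ᶜ, (Ultrafilter.compl_mem_iff_notMem).mpr hD, ?_⟩
      intro β hβ
      refine ⟨g (Sum.inl ⟨β, hβ⟩), gmem (Sum.inl ⟨β, hβ⟩), ?_⟩
      simp only [Set.mem_compl_iff, not_not]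
      exact ⟨⟨β, hβ⟩, rfl⟩
  choose A hAU hA using key
  obtain ⟨I, hIcard, hIY⟩ := hcoh A hAU
  set Y : Set K := ⋂ i ∈ I, A i with hYdef
  have hYcard : #Y = #K := huniform _ hIY
  set β := f Y with hβdef
  have hSβ : S' β = Y := by
    rw [hS'def]
    simp only [hβdef, Equiv.symm_apply_apply]
    exact if_pos hYcard
  have hex : ∃ α ∈ I, β ≤ α := by
    by_contra h
    push_neg at h
    have hsub : I ⊆ Set.Iio β := fun x hx => h x hx
    have := (Cardinal.mk_le_mk_of_subset hsub).trans_lt (Cardinal.mk_Iio_ord_toType β)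
    rw [hIcard] at this
    exact absurd this (lt_irrefl _)
  obtain ⟨α, hαI, hβα⟩ := hex
  obtain ⟨y, hy1, hy2⟩ := hA α β hβα
  rw [hSβ] at hy1
  exact hy2 (Set.biInter_subset_of_mem hαI hy1)
end

section
/- Suppose U is a uniform ultrafilter on κ with dp(U) = ch(U) = λ, i.e., the depth of U equals its character. Then U has a strong generating sequence of length λ. -/
open Cardinal

def AlmostSub {K : Type*} [LinearOrder K] (A B : Set K) : Prop := BddAbove (A \ B)

section Aux
variable {K : Type*} [LinearOrder K]

lemma almostSub_of_subset [Nonempty K] {A B : Set K} (h : A ⊆ B) : AlmostSub A B := by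
  have : A \ B = ∅ := Set.diff_eq_empty.mpr h
  rw [AlmostSub, this]
  exact bddAbove_empty

lemma almostSub_mono {A A' B : Set K} (h : A ⊆ A') (h2 : AlmostSub A' B) : AlmostSub A B :=
  h2.mono (Set.diff_subset_diff_left h)

lemma almostSub_trans {A B C : Set K} (h1 : AlmostSub A B) (h2 : AlmostSub B C) :
    AlmostSub A C := by
  have : A \ C ⊆ (A \ B) ∪ (B \ C) := by
    intro x hx
    by_cases hb : x ∈ B
    · exact Or.inr ⟨hb, hx.2⟩
    · exact Or.inl ⟨hx.1, hb⟩
  exact (h1.union h2).mono this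

lemma exists_pseudo [Nonempty K] (U : Ultrafilter K) (lam : Cardinal)
    (hlow : ∀ theta : Cardinal, theta < lam → theta.IsRegular →
      ∀ B : theta.ord.ToType → Set K, (∀ k, B k ∈ U) →
        (∀ k l, k < l → AlmostSub (B l) (B k)) → ∃ P ∈ U, ∀ k, AlmostSub P (B k))
    (i : lam.ord.ToType) (A : lam.ord.ToType → Set K)
    (hAU : ∀ j, j < i → A j ∈ U)
    (hdec : ∀ j k, j < k → k < i → AlmostSub (A k) (A j)) :
    ∃ P, P ∈ U ∧ ∀ j, j < i → AlmostSub P (A j) := by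
  classical
  by_cases hne : ∃ j, j < i
  swap
  · exact ⟨Set.univ, U.toFilter.univ_mem, fun j hj => absurd ⟨j, hj⟩ hne⟩
  by_cases hmax : ∃ m, m < i ∧ ∀ j, j < i → j ≤ m
  · obtain ⟨m, hm, hmub⟩ := hmax
    refine ⟨A m, hAU m hm, fun j hj => ?_⟩
    rcases lt_or_eq_of_le (hmub j hj) with h | h
    · exact hdec j m h hm
    · subst h; exact almostSub_of_subset subset_rfl
  -- limit case
  push_neg at hmax
  set e := Ordinal.ToType.mk (o := lam.ord) with he
  set τ : lam.ord.ToType → Ordinal := fun j => (e.symm j : Ordinal) with hτ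
  have hτlt : ∀ j : lam.ord.ToType, τ j < lam.ord := fun j => (e.symm j).2
  have hτmono : ∀ {j k : lam.ord.ToType}, τ j < τ k ↔ j < k := by
    intro j k
    rw [hτ]
    exact Iff.trans (by rw [Subtype.coe_lt_coe]) (e.symm.lt_iff_lt)
  have hτinj : Function.Injective τ := by
    intro j k hjk
    exact e.symm.injective (Subtype.ext hjk)
  set o : Ordinal := τ i with ho
  have holt : o < lam.ord := hτlt i
  have hτsurj : ∀ c (hc : c < lam.ord), τ (e ⟨c, hc⟩) = c := by
    intro c hc
    rw [hτ]
    simp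
  have hlim : Order.IsSuccLimit o := by
    rw [Ordinal.isSuccLimit_iff, Order.isSuccPrelimit_iff_succ_lt]
    constructor
    · obtain ⟨j, hj⟩ := hne
      intro h0
      have := hτmono.mpr hj
      rw [← ho, h0] at this
      exact absurd this (by simp)
    · intro c hc
      set j : lam.ord.ToType := e ⟨c, hc.trans holt⟩ with hj
      have hτj : τ j = c := hτsurj _ _
      have hji : j < i := hτmono.mp (by rw [hτj]; exact hc)
      obtain ⟨j', hj'i, hjj'⟩ := hmax j hji
      have : c < τ j' := by rw [← hτj]; exact hτmono.mpr hjj'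
      exact (Order.succ_le_of_lt this).trans_lt (hτmono.mpr hj'i)
  set θ : Cardinal := o.cof with hθ
  have hreg : θ.IsRegular := Cardinal.isRegular_cof hlim
  have hθlt : θ < lam := by
    have h1 : θ ≤ o.card := Ordinal.cof_le_card o
    have h2 : o.card < lam := Cardinal.lt_ord.mp holt
    exact h1.trans_lt h2
  obtain ⟨f, hf⟩ := Ordinal.exists_fundamental_sequence o
  have hfseq : Ordinal.IsFundamentalSequence o θ.ord f := hf
  have hfo : ∀ (c) (hc : c < θ.ord), f c hc < o := by
    intro c hc
    rw [← hfseq.2.2]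
    exact Ordinal.lt_blsub _ _ _
  set eθ := Ordinal.ToType.mk (o := θ.ord) with heθ
  set σ : θ.ord.ToType → Ordinal := fun k => (eθ.symm k : Ordinal) with hσ
  have hσlt : ∀ k : θ.ord.ToType, σ k < θ.ord := fun k => (eθ.symm k).2
  set g : θ.ord.ToType → lam.ord.ToType :=
    fun k => e ⟨f (σ k) (hσlt k), (hfo _ _).trans holt⟩ with hg
  have hτg : ∀ k, τ (g k) = f (σ k) (hσlt k) := fun k => hτsurj _ _
  have hgi : ∀ k, g k < i := by
    intro k
    apply hτmono.mp
    rw [hτg k]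
    exact hfo _ _
  have hσmono : ∀ {k l : θ.ord.ToType}, k < l → σ k < σ l := by
    intro k l hkl
    rw [hσ]
    exact Subtype.coe_lt_coe.mpr (eθ.symm.lt_iff_lt.mpr hkl)
  have hgmono : ∀ {k l : θ.ord.ToType}, k < l → g k < g l := by
    intro k l hkl
    apply hτmono.mp
    rw [hτg k, hτg l]
    exact hfseq.2.1 _ _ (hσmono hkl)
  obtain ⟨P, hPU, hP⟩ := hlow θ hθlt hreg (fun k => A (g k))
    (fun k => hAU _ (hgi k)) (fun k l hkl => hdec _ _ (hgmono hkl) (hgi l))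
  refine ⟨P, hPU, fun j hj => ?_⟩
  have hjo : τ j < Ordinal.blsub θ.ord f := by rw [hfseq.2.2]; exact hτmono.mpr hj
  obtain ⟨c, hc, hcle⟩ := Ordinal.lt_blsub_iff.mp hjo
  set k : θ.ord.ToType := eθ ⟨c, hc⟩ with hk
  have hσk : σ k = c := by rw [hσ, hk]; simp
  have hle : τ j ≤ τ (g k) := by
    rw [hτg k]
    convert hcle using 2 <;> rw [hσk]
  rcases lt_or_eq_of_le hle with h | h
  · exact almostSub_trans (hP k) (hdec j (g k) (hτmono.mp h) (hgi k))
  · have : j = g k := hτinj h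
    rw [this]; exact hP k
end Aux

/-- if `U` is a uniform ultrafilter on `κ` with `dp(U) = ch(U) = λ`, then
`U` has a strong generating sequence of length `λ`. -/
theorem stmt_13 (kappa lam : Cardinal) (hkappa : Cardinal.aleph0 ≤ kappa)
    (U : Ultrafilter kappa.ord.ToType)
    (huniform : ∀ X ∈ U, #X = kappa)
    (hch : IsLeast {c : Cardinal | ∃ B : Set (Set kappa.ord.ToType),
      (∀ b ∈ B, b ∈ U) ∧ (∀ X ∈ U, ∃ b ∈ B, b ⊆ X) ∧ #B = c} lam)
    (hdp : IsLeast {theta : Cardinal | theta.IsRegular ∧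
      ∃ B : theta.ord.ToType → Set kappa.ord.ToType, (∀ i, B i ∈ U) ∧
        (∀ i j : theta.ord.ToType, i < j → AlmostSub (B j) (B i)) ∧
        ¬ ∃ P ∈ U, ∀ i, AlmostSub P (B i)} lam) :
    ∃ A : lam.ord.ToType → Set kappa.ord.ToType, (∀ i, A i ∈ U) ∧
      (∀ i j : lam.ord.ToType, i < j → AlmostSub (A j) (A i)) ∧
      ∀ X ∈ U, ∃ i, AlmostSub (A i) X := by
  classical
  have hne : Nonempty kappa.ord.ToType := by
    rw [Ordinal.toType_nonempty_iff_ne_zero]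
    intro h0
    have : kappa = 0 := by rw [← Cardinal.card_ord kappa, h0, Ordinal.card_zero]
    rw [this] at hkappa
    exact absurd hkappa (by simp [Cardinal.aleph0_ne_zero])
  -- base enumeration
  obtain ⟨Bs, hBU, hBbase, hBcard⟩ := hch.1
  have hmk : #(lam.ord.ToType) = #Bs := by
    rw [Cardinal.mk_toType, Cardinal.card_ord, hBcard]
  obtain ⟨eB⟩ := Cardinal.eq.mp hmk
  set b : lam.ord.ToType → Set kappa.ord.ToType := fun i => (eB i : Set kappa.ord.ToType)
    with hb
  have hbU : ∀ i, b i ∈ U := fun i => hBU _ (eB i).2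
  have hbbase : ∀ X ∈ U, ∃ i, b i ⊆ X := by
    intro X hX
    obtain ⟨c, hc, hsub⟩ := hBbase X hX
    refine ⟨eB.symm ⟨c, hc⟩, ?_⟩
    rw [hb]
    simpa using hsub
  -- depth lower bound
  have hlow : ∀ theta : Cardinal, theta < lam → theta.IsRegular →
      ∀ B : theta.ord.ToType → Set kappa.ord.ToType, (∀ k, B k ∈ U) →
        (∀ k l, k < l → AlmostSub (B l) (B k)) → ∃ P ∈ U, ∀ k, AlmostSub P (B k) := by
    intro theta hlt hreg B hBU' hBdec
    by_contra hno
    exact absurd (hdp.2 ⟨hreg, B, hBU', hBdec, hno⟩) (not_le.mpr hlt)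
  -- recursive construction
  set A : lam.ord.ToType → Set kappa.ord.ToType :=
    WellFounded.fix wellFounded_lt
      (fun i rec =>
        (if h : ∃ P, P ∈ U ∧ ∀ j (hj : j < i), AlmostSub P (rec j hj) then h.choose
         else Set.univ) ∩ b i) with hA
  have hAeq : ∀ i, A i =
      (if h : ∃ P, P ∈ U ∧ ∀ j (hj : j < i), AlmostSub P (A j) then h.choose
       else Set.univ) ∩ b i := fun i => WellFounded.fix_eq _ _ i
  have main : ∀ i, A i ∈ U ∧ A i ⊆ b i ∧ ∀ j, j < i → AlmostSub (A i) (A j) := by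
    intro i
    induction i using WellFoundedLT.induction with
    | ind i IH =>
      have hex : ∃ P, P ∈ U ∧ ∀ j (hj : j < i), AlmostSub P (A j) := by
        obtain ⟨P, hPU, hP⟩ := exists_pseudo U lam hlow i A
          (fun j hj => (IH j hj).1)
          (fun j k hjk hki => (IH k hki).2.2 j hjk)
        exact ⟨P, hPU, fun j hj => hP j hj⟩
      have hAi : A i = hex.choose ∩ b i := by
        rw [hAeq i, dif_pos hex]
      refine ⟨?_, ?_, ?_⟩
      · rw [hAi]
        exact Filter.inter_mem hex.choose_spec.1 (hbU i)
      · rw [hAi]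
        exact Set.inter_subset_right
      · intro j hj
        have : A i ⊆ hex.choose := by rw [hAi]; exact Set.inter_subset_left
        exact almostSub_mono this (hex.choose_spec.2 j hj)
  refine ⟨A, fun i => (main i).1, fun i j hij => (main j).2.2 i hij, fun X hX => ?_⟩
  obtain ⟨i, hi⟩ := hbbase X hX
  exact ⟨i, almostSub_of_subset (((main i).2.1).trans hi)⟩
end
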